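/- Let E be a vector lattice over ℝ (a real vector space with a lattice order such that addition is order-covariant and multiplication by nonnegative scalars is order-preserving), let Y be a real vector space, let n ≥ 1, and let T : Eⁿ → Y be a symmetric n-linear map. Suppose that for all f, g ∈ E with f ≥ 0, g ≥ 0 and f ⊓ g = 0, one has T(f^{n-k} g^{k}) = 0 for every k with 1 ≤ k ≤ n−1. Then for all (not necessarily positive) f, g ∈ E with |f| ⊓ |g| = 0, one has T(f^{n-k} g^{k}) = 0 for every k with 1 ≤ k ≤ n−1. -/

import Mathlib

open Finset

section helpers

variable {E : Type*} [Lattice E] [AddCommGroup E]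
  [CovariantClass E E (· + ·) (· ≤ ·)]

private lemma my_add_inf (t x y : E) : t + (x ⊓ y) = (t + x) ⊓ (t + y) := by
  apply le_antisymm
  · exact le_inf (add_le_add le_rfl inf_le_left) (add_le_add le_rfl inf_le_right)
  · rw [← sub_le_iff_le_add']
    exact le_inf (by rw [sub_le_iff_le_add']; exact inf_le_left)
      (by rw [sub_le_iff_le_add']; exact inf_le_right)

private lemma my_inf_add (t x y : E) : (x ⊓ y) + t = (x + t) ⊓ (y + t) := by
  simpa [add_comm] using my_add_inf t x y

private lemma my_add_inf_zero {a b c : E} (ha : 0 ≤ a) (hb : 0 ≤ b) (hc : 0 ≤ c)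
    (h1 : a ⊓ c = 0) (h2 : b ⊓ c = 0) : (a + b) ⊓ c = 0 := by
  have key : (a + b) ⊓ c ≤ (a ⊓ c) + (b ⊓ c) := by
    rw [my_inf_add, my_add_inf, my_add_inf]
    refine le_inf (le_inf inf_le_left ?_) (le_inf ?_ ?_)
    · exact le_trans inf_le_right (le_add_of_nonneg_left ha)
    · exact le_trans inf_le_right (le_add_of_nonneg_right hb)
    · exact le_trans inf_le_right (le_add_of_nonneg_right hc)
  rw [h1, h2, add_zero] at key
  exact le_antisymm key (le_inf (add_nonneg ha hb) hc)

variable [Module ℝ E] [PosSMulMono ℝ E]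

private lemma my_smul_inf_zero {a c : E} (s : ℝ) (hs : 0 ≤ s) (ha : 0 ≤ a) (hc : 0 ≤ c)
    (h : a ⊓ c = 0) : (s • a) ⊓ c = 0 := by
  set t : ℝ := s + 1 with ht
  have ht0 : (0:ℝ) < t := by positivity
  have h1 : s • a ≤ t • a := by
    rw [ht, add_smul, one_smul]; exact le_add_of_nonneg_right ha
  have h2 : c ≤ t • c := by
    rw [ht, add_smul, one_smul]; exact le_add_of_nonneg_left (smul_nonneg hs hc)
  have key : (t • a) ⊓ (t • c) ≤ 0 := by
    have hw : t⁻¹ • ((t • a) ⊓ (t • c)) ≤ a ⊓ c := by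
      refine le_inf ?_ ?_
      · calc t⁻¹ • ((t • a) ⊓ (t • c)) ≤ t⁻¹ • (t • a) :=
              smul_le_smul_of_nonneg_left inf_le_left (by positivity)
          _ = a := inv_smul_smul₀ ht0.ne' a
      · calc t⁻¹ • ((t • a) ⊓ (t • c)) ≤ t⁻¹ • (t • c) :=
              smul_le_smul_of_nonneg_left inf_le_right (by positivity)
          _ = c := inv_smul_smul₀ ht0.ne' c
    rw [h] at hw
    calc (t • a) ⊓ (t • c) = t • (t⁻¹ • ((t • a) ⊓ (t • c))) := (smul_inv_smul₀ ht0.ne' _).symm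
      _ ≤ t • (0:E) := smul_le_smul_of_nonneg_left hw ht0.le
      _ = 0 := smul_zero t
  have h3 : (s • a) ⊓ c ≤ 0 := le_trans (inf_le_inf h1 h2) key
  exact le_antisymm h3 (le_inf (smul_nonneg hs ha) hc)

private lemma my_le_inf_zero {a' a c : E} (ha' : 0 ≤ a') (hle : a' ≤ a) (hc : 0 ≤ c)
    (h : a ⊓ c = 0) : a' ⊓ c = 0 :=
  le_antisymm (le_trans (inf_le_inf_right c hle) h.le) (le_inf ha' hc)

end helpers

private lemma my_poly_zero {Y : Type*} [AddCommGroup Y] [Module ℝ Y] (m : ℕ) (c : ℕ → Y)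
    (h : ∀ s : ℝ, 0 ≤ s → ∑ j ∈ Finset.range m, s ^ j • c j = 0) (s : ℝ) :
    ∑ j ∈ Finset.range m, s ^ j • c j = 0 := by
  rw [← Module.forall_dual_apply_eq_zero_iff ℝ]
  intro φ
  set p : Polynomial ℝ := ∑ j ∈ Finset.range m, Polynomial.C (φ (c j)) * Polynomial.X ^ j with hp
  have heval : ∀ x : ℝ, p.eval x = φ (∑ j ∈ Finset.range m, x ^ j • c j) := by
    intro x
    simp only [hp, Polynomial.eval_finset_sum, Polynomial.eval_mul, Polynomial.eval_C,
      Polynomial.eval_pow, Polynomial.eval_X, map_sum, map_smul, smul_eq_mul]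
    exact Finset.sum_congr rfl fun j _ => mul_comm _ _
  have hp0 : p = 0 := by
    apply Polynomial.eq_zero_of_infinite_isRoot
    apply Set.Infinite.mono _ (Set.Ici_infinite (0:ℝ))
    intro x hx
    simp only [Set.mem_setOf_eq, Polynomial.IsRoot, heval, h x hx, map_zero]
  have := heval s
  rw [hp0] at this
  simpa using this.symm

private lemma my_flip_sign {E Y : Type*} [AddCommGroup E] [Module ℝ E]
    [AddCommGroup Y] [Module ℝ Y] {n : ℕ} (T : MultilinearMap ℝ (fun _ : Fin n => E) Y)
    (x b : Fin n → E)
    (h : ∀ s : ℝ, 0 ≤ s → T (fun i => x i + s • b i) = 0) :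
    T (fun i => x i - b i) = 0 := by
  classical
  set w : Finset (Fin n) → Y := fun S => T (S.piecewise b x) with hw
  set c : ℕ → Y := fun j => ∑ S ∈ univ.filter (fun S : Finset (Fin n) => S.card = j), w S with hc
  have key : ∀ s : ℝ, T (fun i => x i + s • b i) =
      ∑ j ∈ Finset.range (n + 1), s ^ j • c j := by
    intro s
    have e1 : (fun i => x i + s • b i) = (fun i => s • b i) + x := by
      funext i; simp [add_comm]
    rw [e1, MultilinearMap.map_add_univ]
    have e2 : ∀ S : Finset (Fin n), T (S.piecewise (fun i => s • b i) x) = s ^ S.card • w S := by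
      intro S
      have e3 : S.piecewise (fun i => s • b i) x =
          fun i => (if i ∈ S then s else 1) • S.piecewise b x i := by
        funext i
        by_cases hi : i ∈ S <;> simp [Finset.piecewise, hi]
      rw [e3, MultilinearMap.map_smul_univ]
      congr 1
      rw [Finset.prod_ite_mem, Finset.univ_inter, Finset.prod_const]
    simp only [e2]
    rw [← Finset.sum_fiberwise_of_maps_to (g := Finset.card)
      (show ∀ S ∈ (Finset.univ : Finset (Finset (Fin n))), S.card ∈ Finset.range (n + 1) from
        fun S _ => Finset.mem_range.2 (Nat.lt_succ_of_le (by simpa using Finset.card_le_univ S)))]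
    refine Finset.sum_congr rfl fun j _ => ?_
    rw [hc, Finset.smul_sum]
    refine Finset.sum_congr rfl fun S hS => ?_
    rw [(Finset.mem_filter.1 hS).2]
  have h0 : ∀ s : ℝ, 0 ≤ s → ∑ j ∈ Finset.range (n + 1), s ^ j • c j = 0 := by
    intro s hs; rw [← key]; exact h s hs
  have hm1 := my_poly_zero (n + 1) c h0 (-1)
  have e4 : (fun i => x i - b i) = (fun i => x i + (-1 : ℝ) • b i) := by
    funext i; simp [sub_eq_add_neg]
  rw [e4, key, hm1]

theorem stmt_10 (E Y : Type*) [Lattice E] [AddCommGroup E] [Module ℝ E]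
    [CovariantClass E E (· + ·) (· ≤ ·)] [PosSMulMono ℝ E]
    [AddCommGroup Y] [Module ℝ Y] (n : ℕ) (hn : 1 ≤ n)
    (T : MultilinearMap ℝ (fun _ : Fin n => E) Y)
    (hsym : ∀ (σ : Equiv.Perm (Fin n)) (x : Fin n → E), T (x ∘ σ) = T x)
    (h : ∀ f g : E, 0 ≤ f → 0 ≤ g → f ⊓ g = 0 → ∀ k, 1 ≤ k → k ≤ n - 1 →
      T (fun i => if (i : ℕ) < n - k then f else g) = 0) :
    ∀ f g : E, |f| ⊓ |g| = 0 → ∀ k, 1 ≤ k → k ≤ n - 1 →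
      T (fun i => if (i : ℕ) < n - k then f else g) = 0 := by
  intro f g hfg k hk1 hk2
  set m := n - k with hm
  -- basic positivity and disjointness facts
  have hfp : (0:E) ≤ f⁺ := posPart_nonneg f
  have hfn : (0:E) ≤ f⁻ := negPart_nonneg f
  have hgp : (0:E) ≤ g⁺ := posPart_nonneg g
  have hgn : (0:E) ≤ g⁻ := negPart_nonneg g
  have habs : (0:E) ≤ |f| := abs_nonneg f
  have hgabs : (0:E) ≤ |g| := abs_nonneg g
  have hfpabs : f⁺ ≤ |f| := by
    rw [← posPart_add_negPart f]; exact le_add_of_nonneg_right hfn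
  have hfnabs : f⁻ ≤ |f| := by
    rw [← posPart_add_negPart f]; exact le_add_of_nonneg_left hfp
  have hgpabs : g⁺ ≤ |g| := by
    rw [← posPart_add_negPart g]; exact le_add_of_nonneg_right hgn
  have hgnabs : g⁻ ≤ |g| := by
    rw [← posPart_add_negPart g]; exact le_add_of_nonneg_left hgp
  -- step 1
  have claim1 : ∀ v : E, 0 ≤ v → |f| ⊓ v = 0 →
      T (fun i => if (i : ℕ) < m then f else v) = 0 := by
    intro v hv hdisj
    have hfpv : f⁺ ⊓ v = 0 := my_le_inf_zero hfp hfpabs hv hdisj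
    have hfnv : f⁻ ⊓ v = 0 := my_le_inf_zero hfn hfnabs hv hdisj
    have key := my_flip_sign T (fun i => if (i : ℕ) < m then f⁺ else v)
      (fun i => if (i : ℕ) < m then f⁻ else 0) ?_
    · have e : (fun i : Fin n => (if (i : ℕ) < m then f⁺ else v) -
          (if (i : ℕ) < m then f⁻ else 0)) = (fun i : Fin n => if (i : ℕ) < m then f else v) := by
        funext i; by_cases hi : (i : ℕ) < m <;> simp [hi, posPart_sub_negPart]
      rwa [e] at key
    · intro s hs
      have e : (fun i : Fin n => (if (i : ℕ) < m then f⁺ else v) +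
          s • (if (i : ℕ) < m then f⁻ else 0)) =
          (fun i : Fin n => if (i : ℕ) < m then f⁺ + s • f⁻ else v) := by
        funext i; by_cases hi : (i : ℕ) < m <;> simp [hi]
      rw [e]
      refine h (f⁺ + s • f⁻) v (add_nonneg hfp (smul_nonneg hs hfn)) hv ?_ k hk1 hk2
      exact my_add_inf_zero hfp (smul_nonneg hs hfn) hv hfpv
        (my_smul_inf_zero s hs hfn hv hfnv)
  -- step 2
  have hgpf : g⁺ ⊓ |f| = 0 := my_le_inf_zero hgp hgpabs habs (by rwa [inf_comm] at hfg)
  have hgnf : g⁻ ⊓ |f| = 0 := my_le_inf_zero hgn hgnabs habs (by rwa [inf_comm] at hfg)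
  have key := my_flip_sign T (fun i => if (i : ℕ) < m then f else g⁺)
    (fun i => if (i : ℕ) < m then 0 else g⁻) ?_
  · have e : (fun i : Fin n => (if (i : ℕ) < m then f else g⁺) -
        (if (i : ℕ) < m then 0 else g⁻)) = (fun i : Fin n => if (i : ℕ) < m then f else g) := by
      funext i; by_cases hi : (i : ℕ) < m <;> simp [hi, posPart_sub_negPart]
    rwa [e] at key
  · intro s hs
    have e : (fun i : Fin n => (if (i : ℕ) < m then f else g⁺) +
        s • (if (i : ℕ) < m then 0 else g⁻)) =
        (fun i : Fin n => if (i : ℕ) < m then f else g⁺ + s • g⁻) := by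
      funext i; by_cases hi : (i : ℕ) < m <;> simp [hi]
    rw [e]
    refine claim1 (g⁺ + s • g⁻) (add_nonneg hgp (smul_nonneg hs hgn)) ?_
    rw [inf_comm]
    exact my_add_inf_zero hgp (smul_nonneg hs hgn) habs hgpf
      (my_smul_inf_zero s hs hgn habs hgnf)
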